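/- Let Π be a ground logic program over atoms A with rules indexed by a finite type R, and let T(Π) be its transformed program over A ⊎ R. If M' ⊆ A ⊎ R is a stable model of T(Π), then M = M' ∩ A is a model of Π, i.e. M satisfies every rule of Π. -/
import Mathlib


/-- A ground rule: head ← body⁺, not body⁻. -/
structure Rule (A : Type*) where
  head : A
  bodyPos : Finset A
  bodyNeg : Finset A
deriving DecidableEq

/-- The body of rule `r` is true in interpretation `M`:
`body⁺(r) ⊆ M` and `body⁻(r) ∩ M = ∅`. -/
def BodyTrue {A : Type*} (M : Set A) (r : Rule A) : Prop :=
  ↑r.bodyPos ⊆ M ∧ ∀ a ∈ r.bodyNeg, a ∉ M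

/-- `M` is a model of the program `P` (a family of rules indexed by `R`). -/
def IsModel {A R : Type*} (P : R → Rule A) (M : Set A) : Prop :=
  ∀ r, BodyTrue M (P r) → (P r).head ∈ M

/-- `M` is a supported model of `P`: a model in which every true atom
is the head of some rule of `P` whose body is true in `M`. -/
def IsSupported {A R : Type*} (P : R → Rule A) (M : Set A) : Prop :=
  IsModel P M ∧ ∀ a ∈ M, ∃ r, (P r).head = a ∧ ↑(P r).bodyPos ⊆ M ∧
    ∀ b ∈ (P r).bodyNeg, b ∉ M

/-- `N` is a model of the Gelfond–Lifschitz reduct `P^M`: for every rule of `P`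
surviving the reduct (i.e. with `body⁻(r) ∩ M = ∅`), whose negative literals are
removed, if its positive body holds in `N` then so does its head. -/
def ReductModel {A R : Type*} (P : R → Rule A) (M N : Set A) : Prop :=
  ∀ r, (∀ a ∈ (P r).bodyNeg, a ∉ M) → ↑(P r).bodyPos ⊆ N → (P r).head ∈ N

/-- `M` is a stable model of `P`: `M` is the least model of the reduct `P^M`. -/
def IsStable {A R : Type*} (P : R → Rule A) (M : Set A) : Prop :=
  ReductModel P M M ∧ ∀ N, ReductModel P M N → M ⊆ N

/-- Index type for the rules of the transformed program `T(P)`: one rule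
`head(r) ← not dm_r` per rule `r`, one rule `dm_r ← not l` per `l ∈ body⁺(r)`,
and one rule `dm_r ← l` per `l ∈ body⁻(r)`. -/
abbrev TransIdx {A R : Type*} (P : R → Rule A) : Type _ :=
  R ⊕ ((Σ r : R, {l // l ∈ (P r).bodyPos}) ⊕ (Σ r : R, {l // l ∈ (P r).bodyNeg}))

/-- The transformed program `T(P)` over atoms `A ⊕ R`, where `Sum.inr r`
plays the role of the fresh auxiliary atom `dm_r`. -/
def Transform {A R : Type*} (P : R → Rule A) : TransIdx P → Rule (A ⊕ R)
  | Sum.inl r => ⟨Sum.inl (P r).head, ∅, {Sum.inr r}⟩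
  | Sum.inr (Sum.inl ⟨r, l⟩) => ⟨Sum.inr r, ∅, {Sum.inl l.1}⟩
  | Sum.inr (Sum.inr ⟨r, l⟩) => ⟨Sum.inr r, {Sum.inl l.1}, ∅⟩

/-- `Lift P M = M ∪ { dm_r | the body of rule r is false in M }`,
viewing `M ⊆ A` as a subset of `A ⊕ R` via the left injection. -/
def Lift {A R : Type*} (P : R → Rule A) (M : Set A) : Set (A ⊕ R) :=
  Sum.inl '' M ∪ Sum.inr '' {r | ¬ BodyTrue M (P r)}

/-- If `M'` is a stable model of `T(P)`, then `M = M' ∩ A` is a model of `P`. -/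
theorem stable_model_of_transform_gives_model
    {A R : Type*} [Fintype R] (P : R → Rule A) (M' : Set (A ⊕ R))
    (h : IsStable (Transform P) M') : IsModel P (Sum.inl ⁻¹' M') := by
  obtain ⟨hred, hmin⟩ := h
  intro r hbt
  obtain ⟨hpos, hneg⟩ := hbt
  -- suffices: dm_r ∉ M'
  have hdm : Sum.inr r ∉ M' := by
    intro hmem
    -- N = M' \ {inr r} is a reduct model
    have hN : ReductModel (Transform P) M' (M' \ {Sum.inr r}) := by
      rintro (r' | (⟨r', l⟩ | ⟨r', l⟩)) hnegN hposN
      · -- head inl (P r').head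
        simp only [Transform] at hnegN ⊢
        have hhead : Sum.inl (P r').head ∈ M' := by
          apply hred (Sum.inl r')
          · simpa [Transform] using hnegN
          · simp [Transform]
        exact ⟨hhead, by simp⟩
      · simp only [Transform] at hnegN hposN ⊢
        have hr' : Sum.inr r' ∈ M' := by
          apply hred (Sum.inr (Sum.inl ⟨r', l⟩))
          · simpa [Transform] using hnegN
          · simp [Transform]
        refine ⟨hr', ?_⟩
        simp only [Set.mem_singleton_iff, Sum.inr.injEq]
        rintro rfl
        exact (hnegN _ (by simp)) (hpos (Finset.mem_coe.mpr l.2))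
      · simp only [Transform] at hnegN hposN ⊢
        have hl : Sum.inl l.1 ∈ M' \ {Sum.inr r} := hposN (by simp)
        have hr' : Sum.inr r' ∈ M' := by
          apply hred (Sum.inr (Sum.inr ⟨r', l⟩))
          · simp [Transform]
          · intro x hx
            simp only [Transform, Finset.coe_singleton, Set.mem_singleton_iff] at hx
            subst hx; exact hl.1
        refine ⟨hr', ?_⟩
        simp only [Set.mem_singleton_iff, Sum.inr.injEq]
        rintro rfl
        exact hneg l.1 l.2 hl.1
    have := hmin _ hN hmem
    exact this.2 rfl
  -- now apply reduct model to rule inl r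
  have := hred (Sum.inl r) (by simpa [Transform] using hdm) (by simp [Transform])
  simpa [Transform] using this
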